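/- Let G = (V,E) be an undirected graph, D ⊆ E, and call a cycle a D-cycle if it contains exactly one edge of D. Then the family of D-cycles is uncrossable: given D-cycles C₁, C₂ and a path P₂ in C₂ sharing only its endpoints with C₁, one can choose a path P₁ in C₁ between these endpoints so that P₁ + P₂ contains exactly one edge of D (hence is a D-cycle) and (C₁ − P₁) + (C₂ − P₂) contains a D-cycle. -/

import Mathlib

open Finset

variable {V : Type*} [DecidableEq V]

/-- The edge set of a (simple) cycle in `G`. -/
def IsCycleEdges (G : SimpleGraph V) (s : Finset (Sym2 V)) : Prop :=
  ∃ (u : V) (c : G.Walk u u), c.IsCycle ∧ c.edges.toFinset = s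

/-- The edge set of a (simple) path from `v` to `w` in `G`. -/
def IsPathEdges (G : SimpleGraph V) (v w : V) (s : Finset (Sym2 V)) : Prop :=
  ∃ p : G.Walk v w, p.IsPath ∧ p.edges.toFinset = s

/-- The set of vertices covered by an edge set. -/
def edgeVerts (s : Finset (Sym2 V)) : Set V := {x | ∃ e ∈ s, x ∈ e}

/-- A family of cycles (given by their edge sets) is uncrossable:
for `C₁, C₂` in the family and a `v`-`w`-path `P₂` contained in `C₂` sharing only its
endpoints `v, w` with `C₁`, there is a `v`-`w`-path `P₁` contained in `C₁` such that
`P₁ + P₂` belongs to the family and `(C₁ - P₁) + (C₂ - P₂)` contains a member of the family. -/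
def Uncrossable (G : SimpleGraph V) (𝒞 : Set (Finset (Sym2 V))) : Prop :=
  ∀ C₁ ∈ 𝒞, ∀ C₂ ∈ 𝒞, ∀ v w : V, v ≠ w → ∀ P₂ : Finset (Sym2 V),
    IsPathEdges G v w P₂ → P₂ ⊆ C₂ →
    edgeVerts P₂ ∩ edgeVerts C₁ ⊆ {v, w} →
    v ∈ edgeVerts C₁ → w ∈ edgeVerts C₁ →
    ∃ P₁ : Finset (Sym2 V), IsPathEdges G v w P₁ ∧ P₁ ⊆ C₁ ∧
      (P₁ ∪ P₂) ∈ 𝒞 ∧ ∃ C ∈ 𝒞, C ⊆ (C₁ \ P₁) ∪ (C₂ \ P₂)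


namespace DCAux

variable {V : Type*} [DecidableEq V]

open SimpleGraph

/-- degree of a vertex in a finite edge set -/
def fdeg (S : Finset (Sym2 V)) (z : V) : ℕ := (S.filter (fun e => z ∈ e)).card

lemma fdeg_union_add_inter (S T : Finset (Sym2 V)) (z : V) :
    fdeg (S ∪ T) z + fdeg (S ∩ T) z = fdeg S z + fdeg T z := by
  unfold fdeg
  rw [filter_union, filter_inter_distrib, card_union_add_card_inter]

lemma fdeg_le {S T : Finset (Sym2 V)} (h : T ⊆ S) (z : V) : fdeg T z ≤ fdeg S z :=
  card_le_card (filter_subset_filter _ h)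

lemma fdeg_sdiff {S T : Finset (Sym2 V)} (h : T ⊆ S) (z : V) :
    fdeg (S \ T) z = fdeg S z - fdeg T z := by
  unfold fdeg
  have hf : (S \ T).filter (fun e => z ∈ e) =
      S.filter (fun e => z ∈ e) \ T.filter (fun e => z ∈ e) := by
    ext e; simp only [mem_filter, mem_sdiff]; tauto
  rw [hf, card_sdiff_of_subset (filter_subset_filter _ h)]

lemma fdeg_insert {S : Finset (Sym2 V)} {e : Sym2 V} (he : e ∉ S) (z : V) :
    fdeg (insert e S) z = fdeg S z + if z ∈ e then 1 else 0 := by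
  unfold fdeg
  rw [filter_insert]
  split
  · rw [card_insert_of_notMem (fun hc => he (mem_filter.mp hc).1)]
  · simp

lemma mem_support_of_mem_edges' {G : SimpleGraph V} {v w z : V} {p : G.Walk v w} {e : Sym2 V}
    (he : e ∈ p.edges) (hz : z ∈ e) : z ∈ p.support := by
  induction e with
  | _ a b =>
    rcases Sym2.mem_iff.mp hz with rfl | rfl
    · exact p.fst_mem_support_of_mem_edges he
    · exact p.snd_mem_support_of_mem_edges he

lemma fdeg_eq_zero_of_not_mem_support {G : SimpleGraph V} {v w z : V} {p : G.Walk v w}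
    (hz : z ∉ p.support) : fdeg p.edges.toFinset z = 0 := by
  unfold fdeg
  rw [card_eq_zero, filter_eq_empty_iff]
  intro e he hze
  exact hz (mem_support_of_mem_edges' (List.mem_toFinset.mp he) hze)

lemma path_parity {G : SimpleGraph V} {v w : V} (p : G.Walk v w) (hp : p.IsPath) (z : V) :
    Odd (fdeg p.edges.toFinset z) ↔ v ≠ w ∧ (z = v ∨ z = w) := by
  induction p with
  | nil => simp [fdeg]
  | @cons a x b hadj q ih =>
    rw [SimpleGraph.Walk.cons_isPath_iff] at hp
    obtain ⟨hq, hvq⟩ := hp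
    have hvw : a ≠ b := fun hh => hvq (hh ▸ q.end_mem_support)
    have hvx : a ≠ x := hadj.ne
    have hnm : s(a, x) ∉ q.edges.toFinset := by
      intro hm
      exact hvq (mem_support_of_mem_edges' (List.mem_toFinset.mp hm) (Sym2.mem_mk_left _ _))
    rw [SimpleGraph.Walk.edges_cons, List.toFinset_cons, fdeg_insert hnm]
    have ihq := ih hq
    by_cases hzv : z = a
    · subst hzv
      have h0 : fdeg q.edges.toFinset z = 0 := fdeg_eq_zero_of_not_mem_support hvq
      simp [h0, hvw]
    · by_cases hzx : z = x
      · have hm : z ∈ s(a, x) := by rw [Sym2.mem_iff]; exact Or.inr hzx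
        rw [if_pos hm]
        by_cases hzb : z = b
        · have hxb : x = b := by rw [← hzx, hzb]
          have hOF : Even (fdeg q.edges.toFinset z) :=
            Nat.not_odd_iff_even.mp (fun ho => (ihq.mp ho).1 hxb)
          exact iff_of_true hOF.add_one ⟨hvw, Or.inr hzb⟩
        · have hOF : Odd (fdeg q.edges.toFinset z) :=
            ihq.mpr ⟨fun h => hzb (hzx.trans h), Or.inl hzx⟩
          refine iff_of_false (Nat.not_odd_iff_even.mpr hOF.add_one) ?_
          rintro ⟨-, rfl | rfl⟩
          · exact hzv rfl
          · exact hzb rfl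
      · have hm : z ∉ s(a, x) := by rw [Sym2.mem_iff]; tauto
        rw [if_neg hm, add_zero]
        by_cases hzb : z = b
        · have hxb : x ≠ b := fun h => hzx (hzb.trans h.symm)
          exact iff_of_true (ihq.mpr ⟨hxb, Or.inr hzb⟩) ⟨hvw, Or.inr hzb⟩
        · refine iff_of_false ?_ ?_
          · intro ho
            rcases (ihq.mp ho).2 with h | h
            · exact hzx h
            · exact hzb h
          · rintro ⟨-, rfl | rfl⟩
            · exact hzv rfl
            · exact hzb rfl

lemma cycle_parity {G : SimpleGraph V} {u : V} {c : G.Walk u u} (hc : c.IsCycle) (z : V) :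
    Even (fdeg c.edges.toFinset z) := by
  obtain ⟨x, h, q, rfl⟩ := SimpleGraph.Walk.not_nil_iff.mp hc.not_nil
  rw [SimpleGraph.Walk.cons_isCycle_iff] at hc
  have hnm : s(u, x) ∉ q.edges.toFinset := by simpa using hc.2
  rw [SimpleGraph.Walk.edges_cons, List.toFinset_cons, fdeg_insert hnm]
  have hpar := path_parity q hc.1 z
  have hxu : x ≠ u := h.ne'
  by_cases hz : z = x ∨ z = u
  · have hms : z ∈ s(u, x) := by rcases hz with rfl | rfl <;> simp
    rw [if_pos hms, Nat.even_add_one, Nat.not_even_iff_odd]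
    exact hpar.mpr ⟨hxu, hz⟩
  · have hms : z ∉ s(u, x) := by rw [Sym2.mem_iff]; tauto
    rw [if_neg hms, add_zero, ← Nat.not_odd_iff_even]
    intro ho
    exact hz ((hpar.mp ho).2)

lemma even_card_odd {ι : Type*} [DecidableEq ι] (s : Finset ι) (f : ι → ℕ)
    (h : Even (∑ i ∈ s, f i)) :
    Even ((s.filter fun i => Odd (f i)).card) := by
  classical
  have h1 : (s.filter fun i => Odd (f i)).card = ∑ i ∈ s, if Odd (f i) then 1 else 0 := by
    rw [Finset.card_filter]
  have h2 : ∀ i ∈ s, (if Odd (f i) then 1 else 0) = f i % 2 := by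
    intro i _
    by_cases hi : Odd (f i)
    · simp [hi, (Nat.odd_iff.mp hi).symm]
    · simp [hi, Nat.even_iff.mp (Nat.not_odd_iff_even.mp hi)]
  rw [Nat.even_iff] at h ⊢
  rw [h1, Finset.sum_congr rfl h2, ← Finset.sum_nat_mod, h]

/-- endpoints of a `Sym2` as a finset -/
def e2f (e : Sym2 V) : Finset V :=
  Sym2.lift ⟨fun a b => ({a, b} : Finset V), fun a b => Finset.pair_comm a b⟩ e

@[simp] lemma mem_e2f {z : V} {e : Sym2 V} : z ∈ e2f e ↔ z ∈ e := by
  induction e with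
  | _ a b => simp [e2f, Sym2.mem_iff]

lemma even_odd_verts (S : Finset (Sym2 V)) (hnd : ∀ e ∈ S, ¬ e.IsDiag)
    (T : Set V) [DecidablePred (· ∈ T)]
    (hT : ∀ a b : V, s(a, b) ∈ S → a ∈ T → b ∈ T) :
    Even ((((S.biUnion e2f).filter (· ∈ T)).filter fun z => Odd (fdeg S z)).card) := by
  classical
  set F := (S.biUnion e2f).filter (· ∈ T) with hF
  apply even_card_odd
  have hsum : ∑ z ∈ F, fdeg S z = ∑ e ∈ S, (F.filter (fun z => z ∈ e)).card := by
    unfold fdeg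
    simp only [Finset.card_filter]
    rw [Finset.sum_comm]
  rw [hsum]
  apply Finset.even_sum
  intro e he
  induction e with
  | _ a b =>
    have hab : a ≠ b := fun hc => hnd _ he (by rw [hc]; exact Sym2.isDiag_iff_proj_eq.mpr rfl)
    by_cases haT : a ∈ T
    · have hbT : b ∈ T := hT a b he haT
      have hfe : F.filter (fun z => z ∈ s(a, b)) = {a, b} := by
        ext z
        simp only [hF, Finset.mem_filter, Finset.mem_biUnion, Finset.mem_insert,
          Finset.mem_singleton, Sym2.mem_iff, mem_e2f]
        constructor
        · rintro ⟨-, h⟩; exact h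
        · rintro (rfl | rfl)
          · exact ⟨⟨⟨s(z, b), he, Sym2.mem_mk_left _ _⟩, haT⟩, Or.inl rfl⟩
          · exact ⟨⟨⟨s(a, z), he, Sym2.mem_mk_right _ _⟩, hbT⟩, Or.inr rfl⟩
      rw [hfe, Finset.card_insert_of_notMem (by simp [hab]), Finset.card_singleton]
      exact ⟨1, rfl⟩
    · have hbT : b ∉ T := fun hb => haT (hT b a (by rwa [Sym2.eq_swap]) hb)
      have hfe : F.filter (fun z => z ∈ s(a, b)) = ∅ := by
        rw [Finset.filter_eq_empty_iff]
        intro z hz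
        obtain ⟨-, hzT⟩ := Finset.mem_filter.mp hz
        rw [Sym2.mem_iff]
        rintro (rfl | rfl)
        · exact haT hzT
        · exact hbT hzT
      rw [hfe]
      simp

lemma reachable_of_unique_odd (S : Finset (Sym2 V)) (hnd : ∀ e ∈ S, ¬ e.IsDiag)
    {x y : V} (hxy : x ≠ y)
    (hodd : ∀ z : V, Odd (fdeg S z) ↔ z = x ∨ z = y) :
    (SimpleGraph.fromEdgeSet (↑S : Set (Sym2 V))).Reachable x y := by
  classical
  set H := SimpleGraph.fromEdgeSet (↑S : Set (Sym2 V)) with hH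
  have hT : ∀ a b : V, s(a, b) ∈ S → H.Reachable x a → H.Reachable x b := by
    intro a b hab ha
    have hne : a ≠ b := fun hc => hnd _ hab (by rw [hc]; exact Sym2.isDiag_iff_proj_eq.mpr rfl)
    have hadj : H.Adj a b := by
      rw [hH, SimpleGraph.fromEdgeSet_adj]
      exact ⟨by exact_mod_cast hab, hne⟩
    exact ha.trans hadj.reachable
  have hmain := even_odd_verts S hnd {z | H.Reachable x z} hT
  set F := ((S.biUnion e2f).filter (· ∈ {z | H.Reachable x z})).filter
      (fun z => Odd (fdeg S z)) with hFdef
  have hx_odd : Odd (fdeg S x) := (hodd x).mpr (Or.inl rfl)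
  have hxF : x ∈ F := by
    have hpos : 0 < fdeg S x := by
      rcases hx_odd with ⟨k, hk⟩; omega
    rw [fdeg, Finset.card_pos] at hpos
    obtain ⟨e, he⟩ := hpos
    obtain ⟨heS, hxe⟩ := Finset.mem_filter.mp he
    refine Finset.mem_filter.mpr ⟨Finset.mem_filter.mpr ⟨?_, ?_⟩, hx_odd⟩
    · exact Finset.mem_biUnion.mpr ⟨e, heS, mem_e2f.mpr hxe⟩
    · exact SimpleGraph.Reachable.refl x
  by_contra hnr
  have hFx : ∀ z ∈ F, z = x := by
    intro z hz
    obtain ⟨hz1, hzodd⟩ := Finset.mem_filter.mp hz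
    obtain ⟨-, hzT⟩ := Finset.mem_filter.mp hz1
    rcases (hodd z).mp hzodd with rfl | rfl
    · rfl
    · exact absurd hzT hnr
  have hFeq : F = {x} := Finset.eq_singleton_iff_unique_mem.mpr ⟨hxF, hFx⟩
  rw [hFeq] at hmain
  simp at hmain

lemma exists_cycle_of_even (G : SimpleGraph V) (S : Finset (Sym2 V))
    (hSE : (↑S : Set (Sym2 V)) ⊆ G.edgeSet)
    (heven : ∀ z, Even (fdeg S z)) {d : Sym2 V} (hd : d ∈ S) :
    ∃ (u : V) (c : G.Walk u u), c.IsCycle ∧ d ∈ c.edges.toFinset ∧ c.edges.toFinset ⊆ S := by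
  classical
  revert hd
  induction d with
  | _ x y =>
    intro hd
    have hdE : s(x, y) ∈ G.edgeSet := hSE hd
    have hadj : G.Adj x y := hdE
    have hxy : x ≠ y := hadj.ne
    set S' := S.erase s(x, y) with hS'
    have hsub : S' ⊆ S := Finset.erase_subset _ _
    have hodd : ∀ z, Odd (fdeg S' z) ↔ z = x ∨ z = y := by
      intro z
      have hins : S = insert s(x, y) S' := (Finset.insert_erase hd).symm
      have hfe : fdeg S z = fdeg S' z + if z ∈ s(x, y) then 1 else 0 := by
        conv_lhs => rw [hins]
        rw [fdeg_insert (Finset.notMem_erase _ _)]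
      have hev := heven z
      by_cases hz : z = x ∨ z = y
      · have hm : z ∈ s(x, y) := by rw [Sym2.mem_iff]; exact hz
        rw [if_pos hm] at hfe
        refine iff_of_true ?_ hz
        rw [Nat.even_iff] at hev
        rw [Nat.odd_iff]
        omega
      · have hm : z ∉ s(x, y) := by rw [Sym2.mem_iff]; tauto
        rw [if_neg hm, add_zero] at hfe
        refine iff_of_false ?_ hz
        rw [← hfe, Nat.not_odd_iff_even]
        exact hev
    have hnd : ∀ e ∈ S', ¬ e.IsDiag := fun e he =>
      G.not_isDiag_of_mem_edgeSet (hSE (hsub he))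
    have hreach := reachable_of_unique_odd S' hnd hxy hodd
    set H := SimpleGraph.fromEdgeSet (↑S' : Set (Sym2 V)) with hHdef
    obtain ⟨pw⟩ := hreach
    have hp0 : (pw.toPath : H.Walk x y).IsPath := pw.toPath.2
    set r0 : H.Walk y x := (pw.toPath : H.Walk x y).reverse with hr0
    have hr0p : r0.IsPath := hp0.reverse
    have hr0E : ∀ e ∈ r0.edges, e ∈ S' := by
      intro e he
      have : e ∈ H.edgeSet := r0.edges_subset_edgeSet he
      rw [hHdef, SimpleGraph.edgeSet_fromEdgeSet] at this
      exact_mod_cast this.1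
    have hr0G : ∀ e ∈ r0.edges, e ∈ G.edgeSet := fun e he => hSE (hsub (hr0E e he))
    set r : G.Walk y x := r0.transfer G hr0G with hr
    have hrp : r.IsPath := hr0p.transfer hr0G
    have hredges : r.edges = r0.edges := r0.edges_transfer hr0G
    have hnotin : s(x, y) ∉ r.edges := by
      rw [hredges]
      intro hmem
      exact Finset.notMem_erase _ _ (hr0E _ hmem)
    refine ⟨x, SimpleGraph.Walk.cons hadj r, ?_, ?_, ?_⟩
    · exact (SimpleGraph.Walk.cons_isCycle_iff r hadj).mpr ⟨hrp, hnotin⟩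
    · simp
    · intro e he
      rw [SimpleGraph.Walk.edges_cons, List.mem_toFinset, List.mem_cons] at he
      rcases he with rfl | he
      · exact hd
      · exact hsub (hr0E _ (hredges ▸ he))

lemma exists_edge_of_mem_support {G : SimpleGraph V} {v w : V} (p : G.Walk v w) :
    ¬ p.Nil → ∀ z ∈ p.support, ∃ e ∈ p.edges, z ∈ e := by
  induction p with
  | nil => intro hn; exact absurd SimpleGraph.Walk.Nil.nil hn
  | @cons a x b hadj q ih =>
    intro _ z hz
    rw [SimpleGraph.Walk.support_cons, List.mem_cons] at hz
    rcases hz with rfl | hz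
    · exact ⟨s(z, x), by simp, Sym2.mem_mk_left _ _⟩
    · by_cases hq : q.Nil
      · have : q.support = [x] := SimpleGraph.Walk.nil_iff_support_eq.mp hq
        rw [this, List.mem_singleton] at hz
        subst hz
        exact ⟨s(a, z), by simp, Sym2.mem_mk_right _ _⟩
      · obtain ⟨e, he, hze⟩ := ih hq z hz
        exact ⟨e, by simp [he], hze⟩

lemma path_edges_single {G : SimpleGraph V} {v w : V} {p : G.Walk v w} (hp : p.IsPath)
    (he : s(v, w) ∈ p.edges) : p.edges = [s(v, w)] := by
  cases p with
  | nil => simp at he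
  | @cons a x b hadj q =>
    rw [SimpleGraph.Walk.cons_isPath_iff] at hp
    rw [SimpleGraph.Walk.edges_cons, List.mem_cons] at he
    rcases he with he | he
    · have hxw : x = w := by
        rcases Sym2.eq_iff.mp he with ⟨-, h⟩ | ⟨h1, -⟩
        · exact h.symm
        · exact absurd h1 hadj.ne
      subst hxw
      have hqnil : q.Nil := by
        by_contra hn
        obtain ⟨cx, hadj', t, rfl⟩ := SimpleGraph.Walk.not_nil_iff.mp hn
        have hnodup := hp.1.support_nodup
        rw [SimpleGraph.Walk.support_cons] at hnodup
        exact (List.nodup_cons.mp hnodup).1 t.end_mem_support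
      have hqe : q.edges = [] := by
        have := SimpleGraph.Walk.nil_iff_length_eq.mp hqnil
        rw [← SimpleGraph.Walk.length_edges] at this
        exact List.length_eq_zero_iff.mp this
      rw [SimpleGraph.Walk.edges_cons, hqe]
    · exfalso
      have : v ∈ q.support := q.fst_mem_support_of_mem_edges he
      exact hp.2 this

lemma sym2_eq_pair {v w : V} (e : Sym2 V) (hd : ¬ e.IsDiag)
    (h : ∀ z ∈ e, z = v ∨ z = w) (hvw : v ≠ w) : e = s(v, w) := by
  induction e with
  | _ a b =>
    have hab : a ≠ b := by rwa [Sym2.mk_isDiag_iff] at hd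
    rcases h a (Sym2.mem_mk_left _ _) with rfl | rfl <;>
      rcases h b (Sym2.mem_mk_right _ _) with rfl | rfl
    · exact absurd rfl hab
    · rfl
    · exact Sym2.eq_swap
    · exact absurd rfl hab

lemma cycle_split {G : SimpleGraph V} {u v w : V} {c : G.Walk u u} (hc : c.IsCycle)
    (hv : v ∈ c.support) (hw : w ∈ c.support) (hvw : v ≠ w) :
    ∃ (p q : G.Walk v w), p.IsPath ∧ q.IsPath ∧
      Disjoint p.edges.toFinset q.edges.toFinset ∧
      p.edges.toFinset ∪ q.edges.toFinset = c.edges.toFinset := by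
  classical
  have hwt : w ∈ c.support.tail := by
    obtain ⟨x, hadj, t, rfl⟩ := SimpleGraph.Walk.not_nil_iff.mp hc.not_nil
    rcases (SimpleGraph.Walk.mem_support_iff _).mp hw with rfl | h
    · simpa using t.end_mem_support
    · simpa using h
  set c' := c.rotate v hv with hc'def
  have hc' : c'.IsCycle := hc.rotate hv
  have hw' : w ∈ c'.support := by
    have hperm := SimpleGraph.Walk.support_rotate c v hv
    exact (SimpleGraph.Walk.mem_support_iff _).mpr (Or.inr (hperm.perm.mem_iff.mpr hwt))
  have hedgesF : c'.edges.toFinset = c.edges.toFinset :=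
    List.toFinset_eq_of_perm _ _ (SimpleGraph.Walk.rotate_edges c v hv).perm
  obtain ⟨x, hadj, t, hceq⟩ := SimpleGraph.Walk.not_nil_iff.mp hc'.not_nil
  have hcc : (SimpleGraph.Walk.cons hadj t).IsCycle := hceq ▸ hc'
  rw [SimpleGraph.Walk.cons_isCycle_iff] at hcc
  obtain ⟨ht, hne⟩ := hcc
  have hwt' : w ∈ t.support := by
    have hmem : w ∈ (SimpleGraph.Walk.cons hadj t).support := hceq ▸ hw'
    rw [SimpleGraph.Walk.support_cons, List.mem_cons] at hmem
    rcases hmem with rfl | h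
    · exact absurd rfl hvw
    · exact h
  set tk := t.takeUntil w hwt' with htkdef
  set td := t.dropUntil w hwt' with htddef
  have hts : tk.append td = t := SimpleGraph.Walk.take_spec t hwt'
  have htk : tk.IsPath := ht.takeUntil hwt'
  have htd : td.IsPath := ht.dropUntil hwt'
  have hsupp : t.support = tk.support ++ td.support.tail := by
    rw [← hts, SimpleGraph.Walk.support_append]
  have hnd : t.support.Nodup := ht.support_nodup
  have hvtd : v ∈ td.support.tail := by
    rcases (SimpleGraph.Walk.mem_support_iff td).mp td.end_mem_support with h1 | h2
    · exact absurd h1 hvw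
    · exact h2
  have hvtk : v ∉ tk.support := by
    rw [hsupp] at hnd
    intro hmem
    exact List.disjoint_of_nodup_append hnd hmem hvtd
  have hedges : c'.edges = s(v, x) :: (tk.edges ++ td.edges) := by
    rw [hceq, SimpleGraph.Walk.edges_cons, ← SimpleGraph.Walk.edges_append, hts]
  have hndE : c'.edges.Nodup := hc'.edges_nodup
  rw [hedges] at hndE
  have hndE1 : s(v, x) ∉ tk.edges ++ td.edges := (List.nodup_cons.mp hndE).1
  have hndE2 : (tk.edges ++ td.edges).Nodup := (List.nodup_cons.mp hndE).2
  have hdisjtd : List.Disjoint tk.edges td.edges := List.disjoint_of_nodup_append hndE2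
  refine ⟨SimpleGraph.Walk.cons hadj tk, td.reverse, ?_, htd.reverse, ?_, ?_⟩
  · rw [SimpleGraph.Walk.cons_isPath_iff]
    exact ⟨htk, hvtk⟩
  · rw [Finset.disjoint_left]
    intro e he1 he2
    rw [List.mem_toFinset, SimpleGraph.Walk.edges_cons, List.mem_cons] at he1
    rw [List.mem_toFinset, SimpleGraph.Walk.edges_reverse, List.mem_reverse] at he2
    rcases he1 with rfl | he1
    · exact hndE1 (List.mem_append_right _ he2)
    · exact hdisjtd he1 he2
  · rw [← hedgesF, hedges]
    ext e
    simp only [Finset.mem_union, List.mem_toFinset, SimpleGraph.Walk.edges_cons,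
      SimpleGraph.Walk.edges_reverse, List.mem_reverse, List.mem_cons, List.mem_append]
    tauto

lemma append_cycle {G : SimpleGraph V} {v w : V} {p q : G.Walk v w}
    (hp : p.IsPath) (hq : q.IsPath) (hvw : v ≠ w)
    (hed : ∀ e, e ∈ p.edges → e ∈ q.edges → False)
    (hsup : ∀ z, z ∈ p.support → z ∈ q.support → z = v ∨ z = w) :
    (p.append q.reverse).IsCycle := by
  rw [SimpleGraph.Walk.isCycle_def]
  refine ⟨?_, ?_, ?_⟩
  · rw [SimpleGraph.Walk.isTrail_def, SimpleGraph.Walk.edges_append,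
      SimpleGraph.Walk.edges_reverse, List.nodup_append]
    exact ⟨hp.edges_nodup, List.nodup_reverse.mpr hq.edges_nodup,
      fun e hep e' he' hee => hed e hep (List.mem_reverse.mp (by rw [hee]; exact he'))⟩
  · intro hnil
    have h1 : ¬ (p.append q.reverse).Nil := by
      rw [SimpleGraph.Walk.not_nil_iff_lt_length, SimpleGraph.Walk.length_append]
      have : 0 < p.length := by
        rcases Nat.eq_zero_or_pos p.length with h | h
        · exact absurd (SimpleGraph.Walk.nil_iff_length_eq.mpr h).eq hvw
        · exact h
      omega
    rw [hnil] at h1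
    exact h1 SimpleGraph.Walk.Nil.nil
  · have htail : (p.append q.reverse).support.tail
        = p.support.tail ++ q.reverse.support.tail := by
      rw [SimpleGraph.Walk.tail_support_append]
    rw [htail, List.nodup_append]
    have hqr : q.reverse.IsPath := hq.reverse
    have hpn := hp.support_nodup
    rw [SimpleGraph.Walk.support_eq_cons p] at hpn
    have hqn := hqr.support_nodup
    rw [SimpleGraph.Walk.support_eq_cons q.reverse] at hqn
    refine ⟨(List.nodup_cons.mp hpn).2, (List.nodup_cons.mp hqn).2, ?_⟩
    intro z hzA z' hzB hzz
    rw [← hzz] at hzB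
    have hzp : z ∈ p.support := List.mem_of_mem_tail hzA
    have hzq : z ∈ q.support := by
      have : z ∈ q.reverse.support := List.mem_of_mem_tail hzB
      rwa [SimpleGraph.Walk.support_reverse, List.mem_reverse] at this
    rcases hsup z hzp hzq with rfl | rfl
    · exact (List.nodup_cons.mp hpn).1 hzA
    · exact (List.nodup_cons.mp hqn).1 hzB

end DCAux

/-- For `D ⊆ E`, the family of `D`-cycles (cycles containing exactly one edge of `D`)
is uncrossable. -/
theorem dCycles_uncrossable (G : SimpleGraph V) (D : Finset (Sym2 V))
    (hD : ↑D ⊆ G.edgeSet) :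
    Uncrossable G {s | IsCycleEdges G s ∧ (s ∩ D).card = 1} := by
  classical
  rintro C₁ ⟨⟨u, c, hc, hcE⟩, hC₁D⟩ C₂ ⟨hC₂c, hC₂D⟩ v w hvw P₂ ⟨p₂, hp₂, hp₂E⟩ hP₂C₂ hVint hvC₁ hwC₁
  obtain ⟨u₂, c₂, hc₂, hc₂E⟩ := hC₂c
  have hC₁mem : C₁ ∈ {s : Finset (Sym2 V) | IsCycleEdges G s ∧ (s ∩ D).card = 1} :=
    ⟨⟨u, c, hc, hcE⟩, hC₁D⟩
  have hC₂mem : C₂ ∈ {s : Finset (Sym2 V) | IsCycleEdges G s ∧ (s ∩ D).card = 1} :=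
    ⟨⟨u₂, c₂, hc₂, hc₂E⟩, hC₂D⟩
  have hC₁E : (↑C₁ : Set (Sym2 V)) ⊆ G.edgeSet := by
    rw [← hcE]; intro e he; exact c.edges_subset_edgeSet (List.mem_toFinset.mp he)
  have hC₂E : (↑C₂ : Set (Sym2 V)) ⊆ G.edgeSet := by
    rw [← hc₂E]; intro e he; exact c₂.edges_subset_edgeSet (List.mem_toFinset.mp he)
  have hvS : v ∈ c.support := by
    obtain ⟨e, heC, hve⟩ := hvC₁
    exact DCAux.mem_support_of_mem_edges'
      (List.mem_toFinset.mp (show e ∈ c.edges.toFinset by rw [hcE]; exact heC)) hve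
  have hwS : w ∈ c.support := by
    obtain ⟨e, heC, hwe⟩ := hwC₁
    exact DCAux.mem_support_of_mem_edges'
      (List.mem_toFinset.mp (show e ∈ c.edges.toFinset by rw [hcE]; exact heC)) hwe
  obtain ⟨pa, pb, hpaP, hpbP, hdisj, huni⟩ := DCAux.cycle_split hc hvS hwS hvw
  rw [hcE] at huni
  by_cases hshare : ∃ e ∈ P₂, e ∈ C₁
  · obtain ⟨e, heP, heC⟩ := hshare
    have heE : e ∈ G.edgeSet := by
      have he' : e ∈ p₂.edges := List.mem_toFinset.mp (by rw [hp₂E]; exact heP)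
      exact p₂.edges_subset_edgeSet he'
    have hz2 : ∀ z ∈ e, z = v ∨ z = w := by
      intro z hz
      have h1 : z ∈ edgeVerts P₂ := ⟨e, heP, hz⟩
      have h2 : z ∈ edgeVerts C₁ := ⟨e, heC, hz⟩
      have := hVint ⟨h1, h2⟩
      simpa using this
    have hevw : e = s(v, w) := DCAux.sym2_eq_pair e (G.not_isDiag_of_mem_edgeSet heE) hz2 hvw
    subst hevw
    have hP2eq : P₂ = {s(v, w)} := by
      have hmem : s(v, w) ∈ p₂.edges := List.mem_toFinset.mp (by rw [hp₂E]; exact heP)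
      rw [← hp₂E, DCAux.path_edges_single hp₂ hmem]
      simp
    have hmemAB : s(v, w) ∈ pa.edges.toFinset ∪ pb.edges.toFinset := by rw [huni]; exact heC
    have key : ∀ (x y : G.Walk v w), x.IsPath → y.IsPath →
        Disjoint x.edges.toFinset y.edges.toFinset →
        x.edges.toFinset ∪ y.edges.toFinset = C₁ →
        s(v, w) ∈ x.edges.toFinset →
        ∃ P₁, IsPathEdges G v w P₁ ∧ P₁ ⊆ C₁ ∧
          (P₁ ∪ P₂) ∈ {s : Finset (Sym2 V) | IsCycleEdges G s ∧ (s ∩ D).card = 1} ∧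
          ∃ C ∈ {s : Finset (Sym2 V) | IsCycleEdges G s ∧ (s ∩ D).card = 1},
            C ⊆ (C₁ \ P₁) ∪ (C₂ \ P₂) := by
      intro x y hx hy hdxy hu hmem
      have hxe : x.edges = [s(v, w)] := DCAux.path_edges_single hx (List.mem_toFinset.mp hmem)
      have hxF : x.edges.toFinset = P₂ := by rw [hxe, hP2eq]; simp
      refine ⟨y.edges.toFinset, ⟨y, hy, rfl⟩, ?_, ?_, C₂, hC₂mem, ?_⟩
      · rw [← hu]; exact Finset.subset_union_right
      · have heq : y.edges.toFinset ∪ P₂ = C₁ := by rw [← hxF, Finset.union_comm, hu]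
        rw [heq]; exact hC₁mem
      · intro z hz
        by_cases hzP : z ∈ P₂
        · apply Finset.mem_union_left
          rw [Finset.mem_sdiff]
          refine ⟨?_, ?_⟩
          · rw [hP2eq, Finset.mem_singleton] at hzP; rw [hzP]; exact heC
          · intro hzy
            exact (Finset.disjoint_left.mp hdxy) (by rw [hxF]; exact hzP) hzy
        · exact Finset.mem_union_right _ (Finset.mem_sdiff.mpr ⟨hz, hzP⟩)
    rcases Finset.mem_union.mp hmemAB with h | h
    · exact key pa pb hpaP hpbP hdisj huni h
    · exact key pb pa hpbP hpaP hdisj.symm (by rw [Finset.union_comm]; exact huni) h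
  · push_neg at hshare
    have hABdisjD : Disjoint (pa.edges.toFinset ∩ D) (pb.edges.toFinset ∩ D) :=
      hdisj.mono Finset.inter_subset_left Finset.inter_subset_left
    have hABD : (pa.edges.toFinset ∩ D).card + (pb.edges.toFinset ∩ D).card = 1 := by
      rw [← Finset.card_union_of_disjoint hABdisjD, ← Finset.union_inter_distrib_right, huni,
        hC₁D]
    have hPDle : (P₂ ∩ D).card ≤ 1 := by
      calc (P₂ ∩ D).card ≤ (C₂ ∩ D).card :=
            Finset.card_le_card (Finset.inter_subset_inter hP₂C₂ Finset.Subset.rfl)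
        _ = 1 := hC₂D
    have key : ∀ (x y : G.Walk v w), x.IsPath → y.IsPath →
        Disjoint x.edges.toFinset y.edges.toFinset →
        x.edges.toFinset ∪ y.edges.toFinset = C₁ →
        (x.edges.toFinset ∩ D).card + (P₂ ∩ D).card = 1 →
        (x.edges.toFinset ∩ D).card + (y.edges.toFinset ∩ D).card = 1 →
        ∃ P₁, IsPathEdges G v w P₁ ∧ P₁ ⊆ C₁ ∧
          (P₁ ∪ P₂) ∈ {s : Finset (Sym2 V) | IsCycleEdges G s ∧ (s ∩ D).card = 1} ∧
          ∃ C ∈ {s : Finset (Sym2 V) | IsCycleEdges G s ∧ (s ∩ D).card = 1},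
            C ⊆ (C₁ \ P₁) ∪ (C₂ \ P₂) := by
      intro x y hx hy hdxy hu hxPD hxyD
      set X := x.edges.toFinset with hX
      set Y := y.edges.toFinset with hY
      have hXC₁ : X ⊆ C₁ := by rw [← hu]; exact Finset.subset_union_left
      have hYC₁ : Y ⊆ C₁ := by rw [← hu]; exact Finset.subset_union_right
      have hedis : ∀ e, e ∈ x.edges → e ∈ p₂.edges → False := by
        intro e hex hep
        exact hshare e (by rw [← hp₂E]; exact List.mem_toFinset.mpr hep)
          (hXC₁ (List.mem_toFinset.mpr hex))
      have hxnil : ¬ x.Nil := SimpleGraph.Walk.not_nil_of_ne hvw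
      have hpnil : ¬ p₂.Nil := SimpleGraph.Walk.not_nil_of_ne hvw
      have hvsup : ∀ z, z ∈ x.support → z ∈ p₂.support → z = v ∨ z = w := by
        intro z hzx hzp
        obtain ⟨e₁, he₁, hze₁⟩ := DCAux.exists_edge_of_mem_support x hxnil z hzx
        obtain ⟨e₂, he₂, hze₂⟩ := DCAux.exists_edge_of_mem_support p₂ hpnil z hzp
        have h1 : z ∈ edgeVerts C₁ := ⟨e₁, hXC₁ (List.mem_toFinset.mpr he₁), hze₁⟩
        have h2 : z ∈ edgeVerts P₂ := ⟨e₂, by rw [← hp₂E]; exact List.mem_toFinset.mpr he₂, hze₂⟩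
        simpa using hVint ⟨h2, h1⟩
      have hcyc : (x.append p₂.reverse).IsCycle := DCAux.append_cycle hx hp₂ hvw hedis hvsup
      have hcycE : (x.append p₂.reverse).edges.toFinset = X ∪ P₂ := by
        rw [SimpleGraph.Walk.edges_append, SimpleGraph.Walk.edges_reverse, List.toFinset_append,
          List.toFinset_reverse, hp₂E]
      have hdisjXP : Disjoint X P₂ := by
        rw [Finset.disjoint_right]
        intro e heP heX
        exact hshare e heP (hXC₁ heX)
      have hcard1 : ((X ∪ P₂) ∩ D).card = 1 := by
        rw [Finset.union_inter_distrib_right,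
          Finset.card_union_of_disjoint
            (hdisjXP.mono Finset.inter_subset_left Finset.inter_subset_left), hxPD]
      set Z := C₂ \ P₂ with hZ
      set S' := (Y ∪ Z) \ (Y ∩ Z) with hS'
      have hYE : (↑Y : Set (Sym2 V)) ⊆ G.edgeSet := fun e he => hC₁E (hYC₁ (by exact_mod_cast he))
      have hS'E : (↑S' : Set (Sym2 V)) ⊆ G.edgeSet := by
        intro e he
        have hYZ : e ∈ Y ∪ Z := Finset.sdiff_subset (by exact_mod_cast he)
        rcases Finset.mem_union.mp hYZ with h | h
        · exact hYE (by exact_mod_cast h)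
        · exact hC₂E (by exact_mod_cast (Finset.mem_sdiff.mp h).1)
      have heven : ∀ z, Even (DCAux.fdeg S' z) := by
        intro z
        have e1 := DCAux.fdeg_union_add_inter Y Z z
        have e2 : DCAux.fdeg S' z = DCAux.fdeg (Y ∪ Z) z - DCAux.fdeg (Y ∩ Z) z := by
          rw [hS']; exact DCAux.fdeg_sdiff Finset.inter_subset_union z
        have e3 : DCAux.fdeg (Y ∩ Z) z ≤ DCAux.fdeg (Y ∪ Z) z :=
          DCAux.fdeg_le Finset.inter_subset_union z
        have e4 : DCAux.fdeg Z z = DCAux.fdeg C₂ z - DCAux.fdeg P₂ z := by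
          rw [hZ]; exact DCAux.fdeg_sdiff hP₂C₂ z
        have e5 : DCAux.fdeg P₂ z ≤ DCAux.fdeg C₂ z := DCAux.fdeg_le hP₂C₂ z
        have e6 : Even (DCAux.fdeg C₂ z) := by rw [← hc₂E]; exact DCAux.cycle_parity hc₂ z
        have e7 : Odd (DCAux.fdeg P₂ z) ↔ z = v ∨ z = w := by
          rw [← hp₂E, DCAux.path_parity p₂ hp₂ z]; simp [hvw]
        have e8 : Odd (DCAux.fdeg Y z) ↔ z = v ∨ z = w := by
          rw [hY, DCAux.path_parity y hy z]; simp [hvw]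
        rw [Nat.even_iff] at e6 ⊢
        rw [Nat.odd_iff] at e7 e8
        by_cases hz : z = v ∨ z = w
        · have o7 := e7.mpr hz
          have o8 := e8.mpr hz
          omega
        · have o7 : ¬ DCAux.fdeg P₂ z % 2 = 1 := fun hh => hz (e7.mp hh)
          have o8 : ¬ DCAux.fdeg Y z % 2 = 1 := fun hh => hz (e8.mp hh)
          omega
      have hd : ∃ d, (Y ∪ Z) ∩ D = {d} ∧ d ∈ S' := by
        rcases (by omega : (Y ∩ D).card = 0 ∨ (Y ∩ D).card = 1) with h0 | h1
        · have hPD0 : (P₂ ∩ D).card = 0 := by omega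
          have hP0 : P₂ ∩ D = ∅ := Finset.card_eq_zero.mp hPD0
          have hZD : Z ∩ D = C₂ ∩ D := by
            rw [hZ]; ext e
            simp only [Finset.mem_inter, Finset.mem_sdiff]
            constructor
            · rintro ⟨⟨h1, -⟩, h2⟩; exact ⟨h1, h2⟩
            · rintro ⟨h1, h2⟩
              refine ⟨⟨h1, fun hP => ?_⟩, h2⟩
              have hm : e ∈ P₂ ∩ D := Finset.mem_inter.mpr ⟨hP, h2⟩
              rw [hP0] at hm; exact absurd hm (Finset.notMem_empty e)
          have hZD1 : (Z ∩ D).card = 1 := by rw [hZD]; exact hC₂D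
          obtain ⟨d, hdd⟩ := Finset.card_eq_one.mp hZD1
          have hY0 : Y ∩ D = ∅ := Finset.card_eq_zero.mp h0
          refine ⟨d, ?_, ?_⟩
          · rw [Finset.union_inter_distrib_right, hY0, hdd, Finset.empty_union]
          · have hdZ : d ∈ Z ∩ D := by rw [hdd]; exact Finset.mem_singleton_self d
            have hdY : d ∉ Y := by
              intro hy'
              have hm : d ∈ Y ∩ D := Finset.mem_inter.mpr ⟨hy', (Finset.mem_inter.mp hdZ).2⟩
              rw [hY0] at hm; exact absurd hm (Finset.notMem_empty d)
            rw [hS', Finset.mem_sdiff]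
            exact ⟨Finset.mem_union_right _ (Finset.mem_inter.mp hdZ).1,
              fun hc' => hdY (Finset.mem_inter.mp hc').1⟩
        · have hPD1 : (P₂ ∩ D).card = 1 := by omega
          have hPC₂D : P₂ ∩ D = C₂ ∩ D :=
            Finset.eq_of_subset_of_card_le
              (Finset.inter_subset_inter hP₂C₂ Finset.Subset.rfl) (by rw [hC₂D, hPD1])
          have hZD : Z ∩ D = ∅ := by
            rw [hZ]; ext e
            simp only [Finset.mem_inter, Finset.mem_sdiff, Finset.notMem_empty, iff_false,
              not_and]
            rintro ⟨h1, h2⟩ h3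
            have hm : e ∈ P₂ ∩ D := by rw [hPC₂D]; exact Finset.mem_inter.mpr ⟨h1, h3⟩
            exact h2 (Finset.mem_inter.mp hm).1
          obtain ⟨d, hdd⟩ := Finset.card_eq_one.mp h1
          refine ⟨d, ?_, ?_⟩
          · rw [Finset.union_inter_distrib_right, hdd, hZD, Finset.union_empty]
          · have hdY : d ∈ Y ∩ D := by rw [hdd]; exact Finset.mem_singleton_self d
            have hdZ : d ∉ Z := by
              intro hz'
              have hm : d ∈ Z ∩ D := Finset.mem_inter.mpr ⟨hz', (Finset.mem_inter.mp hdY).2⟩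
              rw [hZD] at hm; exact absurd hm (Finset.notMem_empty d)
            rw [hS', Finset.mem_sdiff]
            exact ⟨Finset.mem_union_left _ (Finset.mem_inter.mp hdY).1,
              fun hc' => hdZ (Finset.mem_inter.mp hc').2⟩
      obtain ⟨d, hdYZ, hdS⟩ := hd
      obtain ⟨u', c', hc'cyc, hdmem, hsubS⟩ := DCAux.exists_cycle_of_even G S' hS'E heven hdS
      have hdD : d ∈ D := by
        have hm : d ∈ (Y ∪ Z) ∩ D := by rw [hdYZ]; exact Finset.mem_singleton_self d
        exact (Finset.mem_inter.mp hm).2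
      refine ⟨X, ⟨x, hx, rfl⟩, hXC₁, ⟨⟨v, x.append p₂.reverse, hcyc, hcycE⟩, hcard1⟩,
        c'.edges.toFinset, ⟨⟨u', c', hc'cyc, rfl⟩, ?_⟩, ?_⟩
      · have hsub1 : c'.edges.toFinset ∩ D ⊆ {d} := by
          intro e he
          obtain ⟨he1, he2⟩ := Finset.mem_inter.mp he
          have hm : e ∈ (Y ∪ Z) ∩ D :=
            Finset.mem_inter.mpr ⟨Finset.sdiff_subset (hsubS he1), he2⟩
          rw [hdYZ] at hm; exact hm
        have hEQ : c'.edges.toFinset ∩ D = {d} :=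
          Finset.Subset.antisymm hsub1
            (Finset.singleton_subset_iff.mpr (Finset.mem_inter.mpr ⟨hdmem, hdD⟩))
        rw [hEQ, Finset.card_singleton]
      · intro e he
        have hm : e ∈ Y ∪ Z := Finset.sdiff_subset (hsubS he)
        rcases Finset.mem_union.mp hm with h | h
        · exact Finset.mem_union_left _ (Finset.mem_sdiff.mpr
            ⟨hYC₁ h, fun hX' => (Finset.disjoint_left.mp hdxy) hX' h⟩)
        · exact Finset.mem_union_right _ h
    rcases (by omega : (P₂ ∩ D).card = 0 ∨ (P₂ ∩ D).card = 1) with h | h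
    · rcases (by omega : (pa.edges.toFinset ∩ D).card = 1 ∨ (pb.edges.toFinset ∩ D).card = 1) with h1 | h1
      · exact key pa pb hpaP hpbP hdisj huni (by omega) hABD
      · exact key pb pa hpbP hpaP hdisj.symm (by rw [Finset.union_comm]; exact huni)
          (by omega) (by omega)
    · rcases (by omega : (pa.edges.toFinset ∩ D).card = 0 ∨ (pb.edges.toFinset ∩ D).card = 0) with h1 | h1
      · exact key pa pb hpaP hpbP hdisj huni (by omega) hABD
      · exact key pb pa hpbP hpaP hdisj.symm (by rw [Finset.union_comm]; exact huni)
          (by omega) (by omega)
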